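/- arXiv:1104.3724 — 2 statements merged into one kernel-verified Lean document; each statement's English description precedes it below -/
import Mathlib

section
/- For any primitive sequence A of integers ≥ 2, the series ∑_{a ∈ A} 1/(a · log a) converges. -/
open Finset



lemma count_coprime_Ioc (Q k : ℕ) :
    #{m ∈ Finset.Ioc 0 (k*Q) | Nat.Coprime Q m} = k * Q.totient := by
  induction k with
  | zero => simp
  | succ k ih =>
    have hsplit : Finset.Ioc 0 ((k+1)*Q) = Finset.Ioc 0 (k*Q) ∪ Finset.Ioc (k*Q) (k*Q+Q) := by
      rw [Finset.Ioc_union_Ioc_eq_Ioc (Nat.zero_le _) (Nat.le_add_right _ _)]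
      ring_nf
    rw [hsplit, filter_union, Finset.card_union_of_disjoint, ih]
    · have : #{m ∈ Finset.Ioc (k*Q) (k*Q+Q) | Nat.Coprime Q m} = Q.totient := by
        have hIoc : Finset.Ioc (k*Q) (k*Q+Q) = Finset.Ico (k*Q+1) (k*Q+1+Q) := by
          ext x; simp [Nat.lt_succ_iff, Nat.succ_le_iff]; omega
        rw [hIoc, ← Nat.filter_coprime_Ico_eq_totient Q (k*Q+1)]
      rw [this]; ring
    · rw [Finset.disjoint_left]
      intro x hx hy
      simp only [Finset.mem_filter, Finset.mem_Ioc] at hx hy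
      omega

noncomputable def Qf (a : ℕ) : ℕ := ∏ p ∈ Nat.primesBelow (a+1), p

lemma Qf_pos (a : ℕ) : 0 < Qf a :=
  Finset.prod_pos fun p hp => (Nat.prime_of_mem_primesBelow hp).pos

lemma prime_dvd_Qf {p a : ℕ} (hp : p.Prime) : p ∣ Qf a ↔ p ≤ a := by
  constructor
  · intro h
    obtain ⟨q, hq, hpq⟩ := hp.prime.exists_mem_finset_dvd h
    have hq' := Nat.prime_of_mem_primesBelow hq
    have := Nat.lt_of_mem_primesBelow hq
    have : p = q := (Nat.prime_dvd_prime_iff_eq hp hq').mp hpq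
    omega
  · intro h
    exact Finset.dvd_prod_of_mem _ (Nat.mem_primesBelow.mpr ⟨by omega, hp⟩)

lemma coprime_Qf_iff {a m : ℕ} : Nat.Coprime (Qf a) m ↔ ∀ p, p.Prime → p ∣ m → a < p := by
  constructor
  · intro h p hp hpm
    by_contra hle
    have h1 : p ∣ Qf a := (prime_dvd_Qf hp).mpr (by omega)
    have hg : (p:ℕ) ∣ Nat.gcd (Qf a) m := Nat.dvd_gcd h1 hpm
    rw [h] at hg
    exact hp.one_lt.ne' (Nat.eq_one_of_dvd_one hg ▸ rfl)
  · intro h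
    rw [Nat.coprime_comm]
    by_contra hc
    obtain ⟨p, hp, hpm, hpQ⟩ := Nat.Prime.not_coprime_iff_dvd.mp hc
    have := (prime_dvd_Qf hp).mp hpQ
    have := h p hp hpm
    omega

lemma Ma_disj {a b n : ℕ} (ha2 : 2 ≤ a) (hab : a < b) (hnab : ¬ a ∣ b)
    (hn : 0 < n) (han : a ∣ n) (hacop : Nat.Coprime (Qf a) (n/a))
    (hbn : b ∣ n) (hbcop : Nat.Coprime (Qf b) (n/b)) : False := by
  apply hnab
  have hcop : Nat.Coprime a (n/b) := by
    by_contra hc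
    obtain ⟨p, hp, hpa, hpm⟩ := Nat.Prime.not_coprime_iff_dvd.mp hc
    have h1 : p ≤ a := Nat.le_of_dvd (by omega) hpa
    have h2 : b < p := coprime_Qf_iff.mp hbcop p hp hpm
    omega
  have : a ∣ b * (n/b) := by rwa [Nat.mul_div_cancel' hbn]
  exact (Nat.Coprime.dvd_of_dvd_mul_right hcop) this
lemma card_Ma (a Q N : ℕ) (ha : 1 ≤ a) (hQ : 1 ≤ Q) (hdvd : a * Q ∣ N) :
    #{n ∈ Finset.Ioc 0 N | a ∣ n ∧ Nat.Coprime Q (n/a)}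
      = (N/(a*Q)) * Q.totient := by
  have haN : a ∣ N := (dvd_mul_right a Q).trans hdvd
  have key : #{n ∈ Finset.Ioc 0 N | a ∣ n ∧ Nat.Coprime Q (n/a)}
      = #{m ∈ Finset.Ioc 0 (N/a) | Nat.Coprime Q m} := by
    apply Finset.card_bij' (fun n _ => n / a) (fun m _ => a * m)
    · intro n hn
      simp only [Finset.mem_filter, Finset.mem_Ioc] at hn ⊢
      obtain ⟨⟨hn0, hnN⟩, hdvd', hcop⟩ := hn
      exact ⟨⟨Nat.div_pos (Nat.le_of_dvd hn0 hdvd') (by omega), Nat.div_le_div_right hnN⟩, hcop⟩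
    · intro m hm
      simp only [Finset.mem_filter, Finset.mem_Ioc] at hm ⊢
      obtain ⟨⟨hm0, hmN⟩, hcop⟩ := hm
      refine ⟨⟨by positivity, ?_⟩, dvd_mul_right a m, by rwa [Nat.mul_div_cancel_left m (by omega)]⟩
      calc a * m ≤ a * (N/a) := Nat.mul_le_mul_left a hmN
        _ = N := Nat.mul_div_cancel' haN
    · intro n hn
      simp only [Finset.mem_filter, Finset.mem_Ioc] at hn
      exact Nat.mul_div_cancel' hn.2.1
    · intro m hm
      exact Nat.mul_div_cancel_left m (by omega)
  rw [key]
  have : N / a = (N/(a*Q)) * Q := by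
    obtain ⟨k, rfl⟩ := hdvd
    rw [Nat.mul_div_cancel_left k (Nat.mul_pos (by omega) (by omega)), mul_assoc, Nat.mul_div_cancel_left _ (by omega : 0 < a)]
    ring
  rw [this, count_coprime_Ioc]

lemma key_ineq (A : Set ℕ) (h2 : ∀ a ∈ A, 2 ≤ a)
    (hprim : ∀ a ∈ A, ∀ b ∈ A, a ≠ b → ¬ a ∣ b)
    (s : Finset ℕ) (hs : ∀ a ∈ s, a ∈ A) :
    ∑ a ∈ s, ((Qf a).totient : ℝ) / (a * Qf a) ≤ 1 := by
  classical
  set N : ℕ := ∏ a ∈ s, (a * Qf a) with hN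
  have hNpos : 0 < N := Finset.prod_pos fun a ha =>
    Nat.mul_pos (by have := h2 a (hs a ha); omega) (Qf_pos a)
  have hdvd : ∀ a ∈ s, a * Qf a ∣ N := fun a ha => Finset.dvd_prod_of_mem _ ha
  set F : ℕ → Finset ℕ := fun a => {n ∈ Finset.Ioc 0 N | a ∣ n ∧ Nat.Coprime (Qf a) (n/a)} with hF
  have hcard : ∀ a ∈ s, #(F a) = (N/(a * Qf a)) * (Qf a).totient := fun a ha =>
    card_Ma a (Qf a) N (by have := h2 a (hs a ha); omega) (Qf_pos a) (hdvd a ha)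
  have hdisj : (↑s : Set ℕ).PairwiseDisjoint F := by
    intro a ha b hb hab
    simp only [Finset.disjoint_left, hF]
    intro n hna hnb
    simp only [Finset.mem_filter, Finset.mem_Ioc] at hna hnb
    rcases lt_or_gt_of_ne hab with h | h
    · exact Ma_disj (h2 a (hs a ha)) h (hprim a (hs a ha) b (hs b hb) hab)
        hna.1.1 hna.2.1 hna.2.2 hnb.2.1 hnb.2.2
    · exact Ma_disj (h2 b (hs b hb)) h (hprim b (hs b hb) a (hs a ha) (Ne.symm hab))
        hna.1.1 hnb.2.1 hnb.2.2 hna.2.1 hna.2.2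
  have hsum : ∑ a ∈ s, #(F a) ≤ N := by
    rw [← Finset.card_biUnion hdisj]
    calc #(s.biUnion F) ≤ #(Finset.Ioc 0 N) := by
          apply Finset.card_le_card
          intro n hn
          obtain ⟨a, _, hna⟩ := Finset.mem_biUnion.mp hn
          exact Finset.mem_of_mem_filter n hna
      _ = N := by simp
  have hreal : ∑ a ∈ s, ((N : ℝ) / (a * Qf a)) * (Qf a).totient ≤ N := by
    calc ∑ a ∈ s, ((N : ℝ) / (a * Qf a)) * (Qf a).totient
        = ∑ a ∈ s, (((N/(a * Qf a)) * (Qf a).totient : ℕ) : ℝ) := by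
          apply Finset.sum_congr rfl
          intro a ha
          rw [Nat.cast_mul, Nat.cast_div (hdvd a ha)]
          · push_cast; ring
          · have := h2 a (hs a ha); have := Qf_pos a
            positivity
      _ = ((∑ a ∈ s, (N/(a * Qf a)) * (Qf a).totient : ℕ) : ℝ) := by push_cast; ring
      _ ≤ N := by
          have : ∑ a ∈ s, (N/(a * Qf a)) * (Qf a).totient ≤ N := by
            rw [← Finset.sum_congr rfl hcard]; exact hsum
          exact_mod_cast this
  have hNne : (N:ℝ) ≠ 0 := by exact_mod_cast hNpos.ne'
  calc ∑ a ∈ s, ((Qf a).totient : ℝ) / (a * Qf a)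
      = (∑ a ∈ s, ((N : ℝ) / (a * Qf a)) * (Qf a).totient) / N := by
        rw [Finset.sum_div]
        apply Finset.sum_congr rfl
        intro a ha
        have ha0 : (a:ℝ) ≠ 0 := by have := h2 a (hs a ha); positivity
        have hQ0 : ((Qf a):ℝ) ≠ 0 := by have := Qf_pos a; positivity
        field_simp
    _ ≤ (N:ℝ)/N := by gcongr
    _ = 1 := div_self hNne


lemma log_eq_sum_fact (m : ℕ) (hm : 0 < m) :
    Real.log m = ∑ p ∈ m.primeFactors, (m.factorization p : ℝ) * Real.log p := by
  conv_lhs => rw [← Nat.factorization_prod_pow_eq_self hm.ne']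
  rw [Nat.prod_factorization_eq_prod_primeFactors]
  push_cast
  rw [Real.log_prod]
  · apply Finset.sum_congr rfl
    intro p hp
    rw [Real.log_pow]
  · intro p hp
    have hp2 : (0:ℝ) < p := by exact_mod_cast (Nat.prime_of_mem_primeFactors hp).pos
    positivity

lemma sum_floor_log_le (n : ℕ) :
    ∑ p ∈ Nat.primesBelow (n+1), ((n/p : ℕ) : ℝ) * Real.log p
      ≤ ∑ m ∈ Finset.Ioc 0 n, Real.log m := by
  have step1 : ∑ m ∈ Finset.Ioc 0 n, Real.log m
      = ∑ m ∈ Finset.Ioc 0 n, ∑ p ∈ Nat.primesBelow (n+1), (m.factorization p : ℝ) * Real.log p := by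
    apply Finset.sum_congr rfl
    intro m hm
    rw [Finset.mem_Ioc] at hm
    rw [log_eq_sum_fact m hm.1]
    apply Finset.sum_subset
    · intro p hp
      have h1 := Nat.prime_of_mem_primeFactors hp
      have h2 := Nat.le_of_mem_primeFactors hp
      exact Nat.mem_primesBelow.mpr ⟨by omega, h1⟩
    · intro p _ hp
      rw [← Nat.support_factorization, Finsupp.notMem_support_iff] at hp
      rw [hp]
      simp
  rw [step1, Finset.sum_comm]
  apply Finset.sum_le_sum
  intro p hp
  have hprime := Nat.prime_of_mem_primesBelow hp
  have hlog : (0:ℝ) ≤ Real.log p := Real.log_nonneg (by exact_mod_cast hprime.one_lt.le)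
  rw [← Finset.sum_mul]
  apply mul_le_mul_of_nonneg_right _ hlog
  have : ((n/p : ℕ) : ℝ) = ((#{m ∈ Finset.Ioc 0 n | p ∣ m} : ℕ) : ℝ) := by
    rw [Nat.Ioc_filter_dvd_card_eq_div]
  rw [this]
  have hcard : (#{m ∈ Finset.Ioc 0 n | p ∣ m} : ℝ) ≤ ∑ m ∈ Finset.Ioc 0 n, (m.factorization p : ℝ) := by
    calc (#{m ∈ Finset.Ioc 0 n | p ∣ m} : ℝ)
        = ∑ m ∈ {m ∈ Finset.Ioc 0 n | p ∣ m}, (1:ℝ) := by simp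
      _ ≤ ∑ m ∈ {m ∈ Finset.Ioc 0 n | p ∣ m}, (m.factorization p : ℝ) := by
          apply Finset.sum_le_sum
          intro m hm
          simp only [Finset.mem_filter, Finset.mem_Ioc] at hm
          have := hprime.factorization_pos_of_dvd (by omega) hm.2
          exact_mod_cast this
      _ ≤ ∑ m ∈ Finset.Ioc 0 n, (m.factorization p : ℝ) := by
          apply Finset.sum_le_sum_of_subset_of_nonneg (Finset.filter_subset _ _)
          intro m _ _
          positivity
  exact hcard


lemma Qf_eq (n : ℕ) : Qf n = primorial n := rfl

lemma theta_le (n : ℕ) : ∑ p ∈ Nat.primesBelow (n+1), Real.log p ≤ n * Real.log 4 := by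
  have h1 : ∑ p ∈ Nat.primesBelow (n+1), Real.log p = Real.log (Qf n) := by
    rw [Qf, Nat.cast_prod, Real.log_prod]
    intro p hp
    have := (Nat.prime_of_mem_primesBelow hp).pos
    positivity
  rw [h1]
  calc Real.log (Qf n) ≤ Real.log (4^n) := by
        apply Real.log_le_log (by exact_mod_cast (primorial_pos n))
        exact_mod_cast (Qf_eq n ▸ primorial_le_4_pow n)
    _ = n * Real.log 4 := by rw [Real.log_pow]

lemma sum_log_le (n : ℕ) : ∑ m ∈ Finset.Ioc 0 n, Real.log m ≤ n * Real.log n := by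
  calc ∑ m ∈ Finset.Ioc 0 n, Real.log m ≤ ∑ m ∈ Finset.Ioc 0 n, Real.log n := by
        apply Finset.sum_le_sum
        intro m hm
        rw [Finset.mem_Ioc] at hm
        exact Real.log_le_log (by exact_mod_cast hm.1) (by exact_mod_cast hm.2)
    _ = n * Real.log n := by rw [Finset.sum_const, Nat.card_Ioc]; simp

lemma T_le (n : ℕ) (hn : 1 ≤ n) :
    ∑ p ∈ Nat.primesBelow (n+1), Real.log p / p ≤ Real.log n + Real.log 4 := by
  have hn0 : (0:ℝ) < n := by exact_mod_cast hn
  rw [← mul_le_mul_iff_right₀ hn0]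
  have key : (n:ℝ) * ∑ p ∈ Nat.primesBelow (n+1), Real.log p / p
      ≤ ∑ p ∈ Nat.primesBelow (n+1), ((n/p : ℕ) : ℝ) * Real.log p
        + ∑ p ∈ Nat.primesBelow (n+1), Real.log p := by
    rw [Finset.mul_sum, ← Finset.sum_add_distrib]
    apply Finset.sum_le_sum
    intro p hp
    have hprime := Nat.prime_of_mem_primesBelow hp
    have hp0 : (0:ℝ) < p := by exact_mod_cast hprime.pos
    have hlog : (0:ℝ) ≤ Real.log p := Real.log_nonneg (by exact_mod_cast hprime.one_lt.le)
    have hfloor : (n:ℝ) / p ≤ ((n/p : ℕ) : ℝ) + 1 := by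
      rw [div_le_iff₀ hp0]
      have h1 : n < (n/p + 1) * p := by
        have := Nat.div_add_mod n p
        have := Nat.mod_lt n hprime.pos
        nlinarith [Nat.div_add_mod n p, Nat.mod_lt n hprime.pos]
      calc (n:ℝ) ≤ ((n/p + 1 : ℕ) : ℝ) * p := by
            have : (n:ℝ) ≤ ((n/p+1)*p : ℕ) := by exact_mod_cast h1.le
            push_cast at this ⊢
            linarith
        _ = (((n/p : ℕ) : ℝ) + 1) * p := by push_cast; ring
    calc (n:ℝ) * (Real.log p / p) = ((n:ℝ)/p) * Real.log p := by ring
      _ ≤ (((n/p : ℕ) : ℝ) + 1) * Real.log p := mul_le_mul_of_nonneg_right hfloor hlog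
      _ = ((n/p : ℕ) : ℝ) * Real.log p + Real.log p := by ring
  calc (n:ℝ) * ∑ p ∈ Nat.primesBelow (n+1), Real.log p / p
      ≤ ∑ p ∈ Nat.primesBelow (n+1), ((n/p : ℕ) : ℝ) * Real.log p
        + ∑ p ∈ Nat.primesBelow (n+1), Real.log p := key
    _ ≤ n * Real.log n + n * Real.log 4 := by
        have := sum_floor_log_le n
        have := sum_log_le n
        have := theta_le n
        linarith
    _ = n * (Real.log n + Real.log 4) := by ring



lemma T_nonneg (n : ℕ) : 0 ≤ ∑ p ∈ Nat.primesBelow (n+1), Real.log p / p := by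
  apply Finset.sum_nonneg
  intro p hp
  have h1 := (Nat.prime_of_mem_primesBelow hp).one_lt
  have h2 : (0:ℝ) ≤ Real.log p := Real.log_nonneg (by exact_mod_cast h1.le)
  positivity

noncomputable def WW (n : ℕ) : ℝ := Real.log (Real.log n) - Real.log 4 / Real.log n

lemma abel_claim (n : ℕ) (hn : 2 ≤ n) :
    ∑ p ∈ Nat.primesBelow (n+1), 1/(p:ℝ)
      - (∑ p ∈ Nat.primesBelow (n+1), Real.log p / p) / Real.log n ≤ WW n - WW 2 := by
  induction n, hn using Nat.le_induction with
  | base =>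
    have : Nat.primesBelow 3 = {2} := by decide
    rw [this]
    simp only [Finset.sum_singleton]
    have h2 : Real.log 2 ≠ 0 := by
      have := Real.log_pos (by norm_num : (1:ℝ) < 2); linarith
    push_cast
    field_simp
    simp
  | succ n hn ih =>
    have hlogn : (0:ℝ) < Real.log n := Real.log_pos (by exact_mod_cast hn)
    have hlogn1 : (0:ℝ) < Real.log (n+1) := Real.log_pos (by push_cast; linarith [show (2:ℝ) ≤ n by exact_mod_cast hn])
    have hmono : Real.log n ≤ Real.log (n+1) := Real.log_le_log (by positivity) (by push_cast; linarith)
    have hsucc : Nat.primesBelow (n+1+1)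
        = if (n+1).Prime then insert (n+1) (Nat.primesBelow (n+1)) else Nat.primesBelow (n+1) :=
      Nat.primesBelow_succ (n+1)
    have hnotmem : (n+1) ∉ Nat.primesBelow (n+1) := Nat.notMem_primesBelow (n+1)
    -- difference computation
    have hdiff : ∑ p ∈ Nat.primesBelow (n+1+1), 1/(p:ℝ)
        - (∑ p ∈ Nat.primesBelow (n+1+1), Real.log p / p) / Real.log (n+1)
        - (∑ p ∈ Nat.primesBelow (n+1), 1/(p:ℝ)
          - (∑ p ∈ Nat.primesBelow (n+1), Real.log p / p) / Real.log n)
        = (∑ p ∈ Nat.primesBelow (n+1), Real.log p / p) * (1/Real.log n - 1/Real.log (n+1)) := by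
      by_cases hp : (n+1).Prime
      · rw [hsucc, if_pos hp, Finset.sum_insert hnotmem, Finset.sum_insert hnotmem]
        push_cast
        field_simp
        ring
      · rw [hsucc, if_neg hp]
        field_simp
        ring
    have hTle : ∑ p ∈ Nat.primesBelow (n+1), Real.log p / p ≤ Real.log n + Real.log 4 :=
      T_le n (by omega)
    have hfactor : (0:ℝ) ≤ 1/Real.log n - 1/Real.log (n+1) := by
      rw [sub_nonneg]
      apply one_div_le_one_div_of_le hlogn hmono
    have hstep : (∑ p ∈ Nat.primesBelow (n+1), Real.log p / p) * (1/Real.log n - 1/Real.log (n+1))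
        ≤ WW (n+1) - WW n := by
      calc (∑ p ∈ Nat.primesBelow (n+1), Real.log p / p) * (1/Real.log n - 1/Real.log (n+1))
          ≤ (Real.log n + Real.log 4) * (1/Real.log n - 1/Real.log (n+1)) :=
            mul_le_mul_of_nonneg_right hTle hfactor
        _ = (1 - Real.log n/Real.log (n+1))
            + Real.log 4 * (1/Real.log n - 1/Real.log (n+1)) := by field_simp
        _ ≤ (Real.log (Real.log (n+1)) - Real.log (Real.log n))
            + Real.log 4 * (1/Real.log n - 1/Real.log (n+1)) := by
            have hkey : Real.log (Real.log n) - Real.log (Real.log (n+1))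
                ≤ Real.log n / Real.log (n+1) - 1 := by
              have := Real.log_le_sub_one_of_pos (show (0:ℝ) < Real.log n / Real.log (n+1) by positivity)
              rwa [Real.log_div hlogn.ne' hlogn1.ne'] at this
            linarith
        _ = WW (n+1) - WW n := by
            unfold WW
            push_cast
            field_simp
            ring
    push_cast
    linarith [hdiff, ih, hstep]


noncomputable def CC : ℝ := 1 + 2 * Real.log 4 / Real.log 2 - Real.log (Real.log 2)

lemma U_le (n : ℕ) (hn : 2 ≤ n) :
    ∑ p ∈ Nat.primesBelow (n+1), 1/(p:ℝ) ≤ Real.log (Real.log n) + CC := by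
  have h1 := abel_claim n hn
  have hlog2 : (0:ℝ) < Real.log 2 := Real.log_pos (by norm_num)
  have hlogn : Real.log 2 ≤ Real.log n := Real.log_le_log (by norm_num) (by exact_mod_cast hn)
  have hlogn0 : (0:ℝ) < Real.log n := lt_of_lt_of_le hlog2 hlogn
  have hlog4 : (0:ℝ) ≤ Real.log 4 := Real.log_nonneg (by norm_num)
  have h2 : (∑ p ∈ Nat.primesBelow (n+1), Real.log p / p) / Real.log n
      ≤ 1 + Real.log 4 / Real.log 2 := by
    calc (∑ p ∈ Nat.primesBelow (n+1), Real.log p / p) / Real.log n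
        ≤ (Real.log n + Real.log 4) / Real.log n := by
          gcongr
          exact T_le n (by omega)
      _ = 1 + Real.log 4 / Real.log n := by field_simp
      _ ≤ 1 + Real.log 4 / Real.log 2 := by
          have := div_le_div_of_nonneg_left hlog4 hlog2 hlogn
          linarith
  have h3 : WW n ≤ Real.log (Real.log n) := by
    unfold WW
    have : 0 ≤ Real.log 4 / Real.log n := by positivity
    linarith
  have h4 : -WW 2 = -Real.log (Real.log 2) + Real.log 4 / Real.log 2 := by
    unfold WW; push_cast; ring
  unfold CC
  have h5 : 0 ≤ Real.log 4 / Real.log n := by positivity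
  have := h1
  unfold WW at this
  push_cast at this ⊢
  have h6 : 2 * Real.log 4 / Real.log 2 = 2*(Real.log 4/Real.log 2) := by ring
  linarith

lemma telescope_sum (n : ℕ) (hn : 1 ≤ n) :
    ∑ m ∈ Finset.Icc 2 n, 1/((m:ℝ)*((m:ℝ)-1)) ≤ 1 := by
  have key : ∀ k : ℕ, 1 ≤ k → ∑ m ∈ Finset.Icc 2 k, 1/((m:ℝ)*((m:ℝ)-1)) ≤ 1 - 1/(k:ℝ) := by
    intro k hk
    induction k, hk using Nat.le_induction with
    | base => simp
    | succ k hk ih =>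
      rw [Finset.sum_Icc_succ_top (by omega)]
      have hk0 : (0:ℝ) < k := by exact_mod_cast hk
      push_cast
      have heq : 1/(((k:ℝ)+1)*(((k:ℝ)+1)-1)) = 1/(k:ℝ) - 1/((k:ℝ)+1) := by
        rw [div_sub_div _ _ (by positivity) (by positivity)]
        congr 1 <;> ring
      linarith
  calc ∑ m ∈ Finset.Icc 2 n, 1/((m:ℝ)*((m:ℝ)-1)) ≤ 1 - 1/(n:ℝ) := key n hn
    _ ≤ 1 := by
      have : (0:ℝ) < n := by exact_mod_cast hn
      have : 0 ≤ 1/(n:ℝ) := by positivity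
      linarith

lemma prod_lb (n : ℕ) (hn : 2 ≤ n) :
    Real.exp (-(CC+1)) / Real.log n ≤ ∏ p ∈ Nat.primesBelow (n+1), (1 - 1/(p:ℝ)) := by
  have hexp : ∏ p ∈ Nat.primesBelow (n+1), Real.exp (-(1/((p:ℝ)-1)))
      ≤ ∏ p ∈ Nat.primesBelow (n+1), (1 - 1/(p:ℝ)) := by
    apply Finset.prod_le_prod
    · intro p _; positivity
    · intro p hp
      have hp2 : 2 ≤ p := (Nat.prime_of_mem_primesBelow hp).two_le
      have hp2' : (2:ℝ) ≤ p := by exact_mod_cast hp2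
      have h1 : (0:ℝ) < (p:ℝ) - 1 := by linarith
      have h2 : 1 + 1/((p:ℝ)-1) ≤ Real.exp (1/((p:ℝ)-1)) := by
        have := Real.add_one_le_exp (1/((p:ℝ)-1)); linarith
      rw [Real.exp_neg]
      have h3 : 1/(p:ℝ) ≤ 1/2 := by
        apply one_div_le_one_div_of_le <;> linarith
      rw [inv_le_comm₀ (Real.exp_pos _) (by linarith)]
      calc (1 - 1/(p:ℝ))⁻¹ = 1 + 1/((p:ℝ)-1) := by
            rw [one_sub_div (by positivity : (p:ℝ) ≠ 0), inv_div]
            rw [div_eq_iff h1.ne']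
            field_simp
            ring
        _ ≤ Real.exp (1/((p:ℝ)-1)) := h2
  rw [← Real.exp_sum] at hexp
  have hlogn : (0:ℝ) < Real.log n := Real.log_pos (by exact_mod_cast hn)
  have hsum : ∑ p ∈ Nat.primesBelow (n+1), 1/((p:ℝ)-1)
      ≤ Real.log (Real.log n) + CC + 1 := by
    have hsplit : ∑ p ∈ Nat.primesBelow (n+1), 1/((p:ℝ)-1)
        = ∑ p ∈ Nat.primesBelow (n+1), 1/(p:ℝ)
          + ∑ p ∈ Nat.primesBelow (n+1), 1/((p:ℝ)*((p:ℝ)-1)) := by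
      rw [← Finset.sum_add_distrib]
      apply Finset.sum_congr rfl
      intro p hp
      have hp2 : (2:ℝ) ≤ p := by exact_mod_cast (Nat.prime_of_mem_primesBelow hp).two_le
      have hp0 : (0:ℝ) < p := by linarith
      have hp1 : (0:ℝ) < (p:ℝ) - 1 := by linarith
      field_simp
      try ring
    have htail : ∑ p ∈ Nat.primesBelow (n+1), 1/((p:ℝ)*((p:ℝ)-1)) ≤ 1 := by
      calc ∑ p ∈ Nat.primesBelow (n+1), 1/((p:ℝ)*((p:ℝ)-1))
          ≤ ∑ m ∈ Finset.Icc 2 n, 1/((m:ℝ)*((m:ℝ)-1)) := by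
            apply Finset.sum_le_sum_of_subset_of_nonneg
            · intro p hp
              have h1 := (Nat.prime_of_mem_primesBelow hp).two_le
              have h2 := Nat.lt_of_mem_primesBelow hp
              exact Finset.mem_Icc.mpr ⟨h1, by omega⟩
            · intro m hm _
              have h1 : (2:ℝ) ≤ m := by exact_mod_cast (Finset.mem_Icc.mp hm).1
              have h2 : (0:ℝ) < m := by linarith
              have h3 : (0:ℝ) < (m:ℝ) - 1 := by linarith
              positivity
        _ ≤ 1 := telescope_sum n (by omega)
    have := U_le n hn
    linarith
  calc Real.exp (-(CC+1)) / Real.log n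
      = Real.exp (-(Real.log (Real.log n) + CC + 1)) := by
        rw [show -(Real.log (Real.log n) + CC + 1) = -(CC+1) + -(Real.log (Real.log n)) by ring,
          Real.exp_add, Real.exp_neg (Real.log (Real.log (n:ℝ))), Real.exp_log hlogn]
        ring
    _ ≤ Real.exp (∑ p ∈ Nat.primesBelow (n+1), -(1/((p:ℝ)-1))) := by
        apply Real.exp_le_exp.mpr
        rw [Finset.sum_neg_distrib]
        linarith
    _ ≤ ∏ p ∈ Nat.primesBelow (n+1), (1 - 1/(p:ℝ)) := hexp


lemma primeFactors_Qf (a : ℕ) : (Qf a).primeFactors = Nat.primesBelow (a+1) := by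
  ext p
  rw [Nat.mem_primeFactors, Nat.mem_primesBelow]
  constructor
  · rintro ⟨hp, hdvd, -⟩
    exact ⟨by have := (prime_dvd_Qf hp).mp hdvd; omega, hp⟩
  · rintro ⟨hlt, hp⟩
    exact ⟨hp, (prime_dvd_Qf hp).mpr (by omega), (Qf_pos a).ne'⟩

lemma totient_formula (a : ℕ) :
    ((Qf a).totient : ℝ) = (Qf a) * ∏ p ∈ Nat.primesBelow (a+1), (1 - 1/(p:ℝ)) := by
  have h := Nat.totient_eq_mul_prod_factors (Qf a)
  rw [primeFactors_Qf] at h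
  have h2 := congrArg (fun q : ℚ => (q:ℝ)) h
  push_cast at h2
  simpa [one_div] using h2

theorem stmt_3 (A : Set ℕ) (h2 : ∀ a ∈ A, 2 ≤ a)
    (hprim : ∀ a ∈ A, ∀ b ∈ A, a ≠ b → ¬ a ∣ b) :
    Summable (fun a : A => 1 / ((a : ℝ) * Real.log (a : ℕ))) := by
  classical
  apply summable_of_sum_le (c := Real.exp (CC+1))
  · intro x
    have hx : 2 ≤ (x:ℕ) := h2 x x.2
    have h1 : (1:ℝ) < (x:ℕ) := by exact_mod_cast hx
    have hlog : 0 < Real.log (x:ℕ) := Real.log_pos h1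
    have hx0 : (0:ℝ) < (x:ℕ) := by linarith
    positivity
  · intro u
    set s : Finset ℕ := u.image Subtype.val with hs
    have hsub : ∀ a ∈ s, a ∈ A := by
      intro a ha
      obtain ⟨x, -, rfl⟩ := Finset.mem_image.mp ha
      exact x.property
    have hsum_eq : ∑ x ∈ u, 1 / ((x : ℝ) * Real.log (x:ℕ))
        = ∑ a ∈ s, 1 / ((a : ℝ) * Real.log a) := by
      rw [hs, Finset.sum_image (fun x _ y _ h => Subtype.ext h)]
    rw [hsum_eq]
    have hterm : ∀ a ∈ s, 1 / ((a : ℝ) * Real.log a)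
        ≤ Real.exp (CC+1) * (((Qf a).totient : ℝ) / (a * Qf a)) := by
      intro a ha
      have ha2 : 2 ≤ a := h2 a (hsub a ha)
      have ha1 : (1:ℝ) < a := by exact_mod_cast ha2
      have hlog : 0 < Real.log a := Real.log_pos ha1
      have ha0 : (0:ℝ) < a := by linarith
      have hQ0 : (0:ℝ) < Qf a := by exact_mod_cast Qf_pos a
      have hprod := prod_lb a ha2
      have hform := totient_formula a
      have hexp : (0:ℝ) < Real.exp (CC+1) := Real.exp_pos _
      have key : ((Qf a).totient : ℝ) / (a * Qf a)
          = (∏ p ∈ Nat.primesBelow (a+1), (1 - 1/(p:ℝ))) / a := by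
        rw [hform]
        field_simp
      rw [key]
      have hid : 1/((a:ℝ) * Real.log a)
          = Real.exp (CC+1) * ((Real.exp (-(CC+1))/Real.log a) / a) := by
        rw [Real.exp_neg]
        field_simp
      rw [hid]
      gcongr
    calc ∑ a ∈ s, 1 / ((a : ℝ) * Real.log a)
        ≤ ∑ a ∈ s, Real.exp (CC+1) * (((Qf a).totient : ℝ) / (a * Qf a)) :=
          Finset.sum_le_sum hterm
      _ = Real.exp (CC+1) * ∑ a ∈ s, (((Qf a).totient : ℝ) / (a * Qf a)) := by
          rw [Finset.mul_sum]
      _ ≤ Real.exp (CC+1) * 1 :=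
          mul_le_mul_of_nonneg_left (key_ineq A h2 hprim s hsub) (Real.exp_pos _).le
      _ = Real.exp (CC+1) := mul_one _
end

section
/- The series ∑_{p prime} 1/(p · log p) converges. -/
open Finset Real

/-- Counting lemma: any finite set of primes lying in the dyadic block
`Nat.log 2 p = k` has at most `2^(k+2)/k` elements. -/
lemma dyadic_prime_count (k : ℕ) (T : Finset {p : ℕ // p.Prime})
    (hT : ∀ p ∈ T, Nat.log 2 (p : ℕ) = k) : T.card * k ≤ 2 ^ (k + 2) := by
  have h1 : (2 : ℕ) ^ (k * T.card) ≤ ∏ p ∈ T, (p : ℕ) := by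
    rw [pow_mul, ← Finset.prod_const]
    refine Finset.prod_le_prod' fun p hp => ?_
    rw [← hT p hp]
    exact Nat.pow_log_le_self 2 p.2.pos.ne'
  have h2 : (∏ p ∈ T, (p : ℕ)) ∣ primorial (2 ^ (k + 1)) := by
    have he : ∏ p ∈ T, (p : ℕ) = ∏ q ∈ T.image Subtype.val, q :=
      (Finset.prod_image (f := fun q => q) (fun a _ b _ h => Subtype.coe_injective h)).symm
    rw [he]
    unfold primorial
    apply Finset.prod_dvd_prod_of_subset _ _ _
    intro q hq
    simp only [Finset.mem_image] at hq
    obtain ⟨p, hp, rfl⟩ := hq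
    simp only [Finset.mem_filter, Finset.mem_range]
    refine ⟨?_, p.2⟩
    have := Nat.lt_pow_succ_log_self (by norm_num : 1 < 2) (p : ℕ)
    rw [hT p hp] at this
    omega
  have h3 : primorial (2 ^ (k + 1)) ≤ 2 ^ (2 ^ (k + 2)) := by
    calc primorial (2 ^ (k + 1)) ≤ 4 ^ (2 ^ (k + 1)) := primorial_le_4_pow _
      _ = 2 ^ (2 ^ (k + 2)) := by
          rw [show (4 : ℕ) = 2 ^ 2 by norm_num, ← pow_mul, pow_succ (2:ℕ) (k+1)]
          ring_nf
  have h4 : (2 : ℕ) ^ (k * T.card) ≤ 2 ^ (2 ^ (k + 2)) :=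
    h1.trans ((Nat.le_of_dvd (primorial_pos _) h2).trans h3)
  have := (Nat.pow_le_pow_iff_right (by norm_num : 1 < 2)).mp h4
  rwa [mul_comm]

theorem stmt_6 :
    Summable (fun p : {p : ℕ // p.Prime} => 1 / ((p : ℝ) * Real.log (p : ℕ))) := by
  classical
  set h : ℕ → ℝ := fun k => if k = 0 then 0 else 4 / ((k : ℝ) ^ 2 * Real.log 2) with hh
  have hlog2 : (0 : ℝ) < Real.log 2 := Real.log_pos one_lt_two
  have hnn : ∀ k, 0 ≤ h k := by
    intro k
    simp only [hh]
    split
    · exact le_refl 0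
    · positivity
  have hsum : Summable h := by
    refine Summable.of_nonneg_of_le hnn (fun k => ?_)
      ((Real.summable_one_div_nat_pow.mpr one_lt_two).mul_left (4 / Real.log 2))
    simp only [hh]
    split
    · positivity
    · rw [div_mul_div_comm, mul_one, mul_comm (Real.log 2)]
  set g : ℕ → ℝ := fun k => 1 / ((2 : ℝ) ^ k * ((k : ℝ) * Real.log 2)) with hg
  set κ : {p : ℕ // p.Prime} → ℕ := fun p => Nat.log 2 (p : ℕ) with hκ
  have hκ1 : ∀ p : {p : ℕ // p.Prime}, 1 ≤ κ p := fun p =>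
    Nat.log_pos (by norm_num) p.2.two_le
  apply summable_of_sum_le (c := ∑' k, h k)
  · intro p
    have h2 : (2 : ℝ) ≤ (p : ℕ) := by exact_mod_cast p.2.two_le
    have hlogp : 0 < Real.log (p : ℕ) := Real.log_pos (by linarith)
    positivity
  · intro S
    have step1 : ∀ p ∈ S, 1 / ((p : ℝ) * Real.log (p : ℕ)) ≤ g (κ p) := by
      intro p _
      have hp2 : (2 : ℝ) ^ (κ p) ≤ ((p : ℕ) : ℝ) := by
        exact_mod_cast Nat.pow_log_le_self 2 p.2.pos.ne'
      have hk1 : (1 : ℝ) ≤ (κ p : ℝ) := by exact_mod_cast hκ1 p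
      have hlogp : (κ p : ℝ) * Real.log 2 ≤ Real.log (p : ℕ) := by
        rw [← Real.log_pow]
        exact Real.log_le_log (by positivity) hp2
      have hposk : (0 : ℝ) < (κ p : ℝ) * Real.log 2 := by positivity
      apply one_div_le_one_div_of_le
      · positivity
      · exact mul_le_mul hp2 hlogp hposk.le (by positivity)
    calc ∑ p ∈ S, 1 / ((p : ℝ) * Real.log (p : ℕ))
        ≤ ∑ p ∈ S, g (κ p) := Finset.sum_le_sum step1
      _ = ∑ k ∈ S.image κ, #{p ∈ S | κ p = k} • g k := Finset.sum_comp g κ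
      _ ≤ ∑ k ∈ S.image κ, h k := by
          refine Finset.sum_le_sum fun k hk => ?_
          obtain ⟨p, _, hpk⟩ := Finset.mem_image.mp hk
          have hk1 : 1 ≤ k := hpk ▸ hκ1 p
          have hcount : #{p ∈ S | κ p = k} * k ≤ 2 ^ (k + 2) :=
            dyadic_prime_count k _ (fun p hp => (Finset.mem_filter.mp hp).2)
          have hcountR : (#{p ∈ S | κ p = k} : ℝ) * (k : ℝ) ≤ 4 * 2 ^ k := by
            have : ((#{p ∈ S | κ p = k} * k : ℕ) : ℝ) ≤ ((2 ^ (k + 2) : ℕ) : ℝ) :=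
              Nat.cast_le.mpr hcount
            push_cast at this
            calc (#{p ∈ S | κ p = k} : ℝ) * (k : ℝ) ≤ 2 ^ (k + 2) := this
              _ = 4 * 2 ^ k := by ring
          rw [nsmul_eq_mul, hg]
          simp only [hh, if_neg (by omega : k ≠ 0)]
          have hk1R : (1 : ℝ) ≤ (k : ℝ) := by exact_mod_cast hk1
          rw [mul_one_div, div_le_div_iff₀ (by positivity) (by positivity)]
          have h2k : (0:ℝ) < 2 ^ k := by positivity
          nlinarith [mul_le_mul_of_nonneg_right hcountR
            (mul_nonneg (by linarith : (0:ℝ) ≤ (k:ℝ)) hlog2.le)]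
      _ ≤ ∑' k, h k := Summable.sum_le_tsum _ (fun k _ => hnn k) hsum
end
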